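/- With λ, Δ, S, C, P_d as defined, the expected steady-state vehicle delay satisfies ∫_0^Δ (1 − P_d(t)) dt = Δ/2 + (exp(−λΔ) − 1) / (2λ·(exp(λΔ/2) + exp(−λΔ/2) − 1)). (This is the paper's closed-form expected delay E(d) = ∫_0^Δ t dP_d(t), evaluated via the tail-integral formula.) -/

import Mathlib

open Real MeasureTheory intervalIntegral

set_option maxHeartbeats 1600000 in
/-- Expected steady-state vehicle delay via the tail-integral formula
(equation (15) of the paper): `∫₀^Δ (1 − P_d(t)) dt = Δ/2 +
(e^{−λΔ} − 1)/(2λ(e^{λΔ/2} + e^{−λΔ/2} − 1))`. -/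
theorem expected_delay_tail_integral
    (lam Δ S C : ℝ) (P : ℝ → ℝ) (hlam : 0 < lam) (hΔ : 0 < Δ)
    (hS : S = Real.exp (lam * Δ / 2) + Real.exp (-(lam * Δ) / 2) - 1)
    (hC : C = lam * (1 + Real.exp (-(lam * Δ))) / (8 * S))
    (hP : ∀ t ∈ Set.Icc (0 : ℝ) Δ,
      P t = (4 * C / lam) *
          (Real.exp (lam * t / 2) - Real.exp (lam * (Δ - t) / 2) +
            Real.exp (lam * Δ / 2 - lam * t)) +
        (1 - Real.exp (-(lam * t))) / 2) :
    (∫ t in (0 : ℝ)..Δ, (1 - P t)) =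
      Δ / 2 + (Real.exp (-(lam * Δ)) - 1) /
        (2 * lam * (Real.exp (lam * Δ / 2) + Real.exp (-(lam * Δ) / 2) - 1)) := by
  have hlam' : lam ≠ 0 := hlam.ne'
  set g : ℝ → ℝ := fun t => 1 - ((4 * C / lam) *
      (Real.exp (lam * t / 2) - Real.exp (lam * (Δ - t) / 2) +
        Real.exp (lam * Δ / 2 - lam * t)) +
      (1 - Real.exp (-(lam * t))) / 2) with hg
  have hcong : (∫ t in (0 : ℝ)..Δ, (1 - P t)) = ∫ t in (0 : ℝ)..Δ, g t := by
    apply intervalIntegral.integral_congr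
    intro t ht
    rw [Set.uIcc_of_le hΔ.le] at ht
    simp [hg, hP t ht]
  rw [hcong]
  set F : ℝ → ℝ := fun t => t - ((4 * C / lam) *
      ((2 / lam) * Real.exp (lam * t / 2) + (2 / lam) * Real.exp (lam * (Δ - t) / 2)
        - (1 / lam) * Real.exp (lam * Δ / 2 - lam * t)) +
      (t / 2 + Real.exp (-(lam * t)) / (2 * lam))) with hF
  have hderiv : ∀ t ∈ Set.uIcc (0 : ℝ) Δ, HasDerivAt F (g t) t := by
    intro t _
    have h1 : HasDerivAt (fun t : ℝ => lam * t / 2) (lam / 2) t := by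
      simpa using ((hasDerivAt_id t).const_mul lam).div_const 2
    have h2 : HasDerivAt (fun t : ℝ => lam * (Δ - t) / 2) (-lam / 2) t := by
      have : HasDerivAt (fun t : ℝ => Δ - t) (-1) t := by
        simpa using (hasDerivAt_id t).const_sub Δ
      simpa using (this.const_mul lam).div_const 2
    have h3 : HasDerivAt (fun t : ℝ => lam * Δ / 2 - lam * t) (-lam) t := by
      have : HasDerivAt (fun t : ℝ => lam * t) lam t := by
        simpa using (hasDerivAt_id t).const_mul lam
      simpa using this.const_sub (lam * Δ / 2)
    have h4 : HasDerivAt (fun t : ℝ => -(lam * t)) (-lam) t := by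
      have : HasDerivAt (fun t : ℝ => lam * t) lam t := by
        simpa using (hasDerivAt_id t).const_mul lam
      exact this.neg
    have hid : HasDerivAt (fun t : ℝ => t) 1 t := hasDerivAt_id t
    have H := (hid.sub ((((h1.exp.const_mul (2 / lam)).add
        (h2.exp.const_mul (2 / lam))).sub
        (h3.exp.const_mul (1 / lam))).const_mul (4 * C / lam) |>.add
        ((hid.div_const 2).add ((h4.exp).div_const (2 * lam)))))
    refine H.congr_deriv ?_
    simp only [hg]
    field_simp
    ring
  have hint : IntervalIntegrable g volume 0 Δ := by
    apply Continuous.intervalIntegrable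
    fun_prop
  rw [intervalIntegral.integral_eq_sub_of_hasDerivAt hderiv hint]
  have hS0 : S ≠ 0 := by
    have h1 : (1:ℝ) ≤ Real.exp (lam * Δ / 2) := by
      apply Real.one_le_exp; positivity
    have h2 : (0:ℝ) < Real.exp (-(lam * Δ) / 2) := Real.exp_pos _
    rw [hS]; nlinarith
  have ha : Real.exp (lam * Δ / 2) ≠ 0 := (Real.exp_pos _).ne'
  have e1 : Real.exp (-(lam * Δ) / 2) = 1 / Real.exp (lam * Δ / 2) := by
    rw [eq_div_iff ha, ← Real.exp_add, show -(lam * Δ) / 2 + lam * Δ / 2 = 0 by ring,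
      Real.exp_zero]
  have e2 : Real.exp (-(lam * Δ)) = 1 / (Real.exp (lam * Δ / 2))^2 := by
    rw [eq_div_iff (pow_ne_zero 2 ha), sq, ← mul_assoc, ← Real.exp_add, ← Real.exp_add,
      show -(lam * Δ) + lam * Δ / 2 + lam * Δ / 2 = 0 by ring, Real.exp_zero]
  have e3 : Real.exp (lam * Δ / 2 - lam * Δ) = 1 / Real.exp (lam * Δ / 2) := by
    rw [eq_div_iff ha, ← Real.exp_add, show lam * Δ / 2 - lam * Δ + lam * Δ / 2 = 0 by ring,
      Real.exp_zero]
  have e4 : Real.exp (lam * (Δ - Δ) / 2) = 1 := by norm_num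
  have e5 : Real.exp (lam * 0 / 2) = 1 := by norm_num
  have e6 : Real.exp (lam * (Δ - 0) / 2) = Real.exp (lam * Δ / 2) := by norm_num
  have e7 : Real.exp (lam * Δ / 2 - lam * 0) = Real.exp (lam * Δ / 2) := by norm_num
  have e8 : Real.exp (-(lam * 0)) = 1 := by norm_num
  simp only [hF, hC, hS, e1, e2, e3, e4, e5, e6, e7, e8]
  simp only [hS, e1] at hS0
  have hap : (0:ℝ) < Real.exp (lam * Δ / 2) := Real.exp_pos _
  clear hcong hderiv hint hP hC hS e1 e2 e3 e4 e5 e6 e7 e8 ha hg hF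
  generalize hA : Real.exp (lam * Δ / 2) = a at hS0 hap ⊢
  have ha0 : a ≠ 0 := hap.ne'
  have hQ : a ^ 2 - a + 1 ≠ 0 := by nlinarith [sq_nonneg (a - 1)]
  have key : a + 1 / a - 1 = (a ^ 2 - a + 1) / a := by field_simp; ring
  rw [key]
  field_simp [hQ, show a * (a - 1) + 1 ≠ 0 by nlinarith [sq_nonneg (a - 1)]]
  ring
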